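/- Deterministic core of the paper's lemma on the second-order bias of the oracle estimator for the treatment-specific mean: let H be a version of E[A | σ(Q_T)] and H* a version of E[A | σ(Q_T, Q₀)], where σ(Q_T) and σ(Q_T, Q₀) are the σ-algebras generated by Q_T and by the pair (Q_T, Q₀) respectively, and assume H ≥ δ and H* ≥ δ P-a.s. as well as G₀ ≥ δ P-a.s. Then |Ψ(Q_T) − Ψ(Q₀)| ≤ δ^{−2}·‖H* − H‖_{L²(P)}·‖Q_T − Q₀‖_{L²(P)}. -/

import Mathlib

open MeasureTheory

/-- Cauchy–Schwarz for bounded functions on a finite measure space. -/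
lemma cs_aux {α : Type*} [MeasurableSpace α] (μ : Measure α) [IsFiniteMeasure μ]
    (u v : α → ℝ) (hu : AEStronglyMeasurable u μ) (hv : AEStronglyMeasurable v μ)
    (Cu Cv : ℝ) (hCu : ∀ᵐ x ∂μ, |u x| ≤ Cu) (hCv : ∀ᵐ x ∂μ, |v x| ≤ Cv) :
    ∫ x, |u x| * |v x| ∂μ
      ≤ Real.sqrt (∫ x, u x ^ 2 ∂μ) * Real.sqrt (∫ x, v x ^ 2 ∂μ) := by
  have h2 : Real.HolderConjugate 2 2 := Real.holderConjugate_iff.mpr ⟨by norm_num, by norm_num⟩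
  have hu2 : MemLp u (ENNReal.ofReal 2) μ :=
    MemLp.of_bound hu Cu (hCu.mono fun x hx => by simpa [Real.norm_eq_abs] using hx)
  have hv2 : MemLp v (ENNReal.ofReal 2) μ :=
    MemLp.of_bound hv Cv (hCv.mono fun x hx => by simpa [Real.norm_eq_abs] using hx)
  have key := integral_mul_norm_le_Lp_mul_Lq h2 hu2 hv2
  have hnu : ∀ x, ‖u x‖ ^ (2:ℝ) = u x ^ 2 := fun x => by
    rw [show (2:ℝ) = ((2:ℕ):ℝ) by norm_num, Real.rpow_natCast, Real.norm_eq_abs, sq_abs]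
  have hnv : ∀ x, ‖v x‖ ^ (2:ℝ) = v x ^ 2 := fun x => by
    rw [show (2:ℝ) = ((2:ℕ):ℝ) by norm_num, Real.rpow_natCast, Real.norm_eq_abs, sq_abs]
  simp only [Real.norm_eq_abs] at key
  have hnu' : ∀ x, |u x| ^ (2:ℝ) = u x ^ 2 := fun x => by
    rw [show (2:ℝ) = ((2:ℕ):ℝ) by norm_num, Real.rpow_natCast, sq_abs]
  have hnv' : ∀ x, |v x| ^ (2:ℝ) = v x ^ 2 := fun x => by
    rw [show (2:ℝ) = ((2:ℕ):ℝ) by norm_num, Real.rpow_natCast, sq_abs]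
  simp only [hnu', hnv'] at key
  calc ∫ x, |u x| * |v x| ∂μ
      ≤ (∫ x, u x ^ 2 ∂μ) ^ (1/(2:ℝ)) * (∫ x, v x ^ 2 ∂μ) ^ (1/(2:ℝ)) := key
    _ = Real.sqrt (∫ x, u x ^ 2 ∂μ) * Real.sqrt (∫ x, v x ^ 2 ∂μ) := by
        rw [Real.sqrt_eq_rpow, Real.sqrt_eq_rpow]

theorem stmt_14
    {Ω 𝒲 : Type*} [MeasurableSpace Ω] [MeasurableSpace 𝒲]
    (P : Measure Ω) [IsProbabilityMeasure P]
    (W : Ω → 𝒲) (A Y G₀ Q₀ : Ω → ℝ)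
    (hW : Measurable W) (hA : Measurable A) (hY : Measurable Y)
    (hAbin : ∀ ω, A ω = 0 ∨ A ω = 1)
    (hYrange : ∀ ω, Y ω ∈ Set.Icc (0:ℝ) 1)
    (hG₀ : G₀ =ᵐ[P] P[A|MeasurableSpace.comap W inferInstance])
    (δ : ℝ) (hδ : δ ∈ Set.Ioo (0:ℝ) 1)
    (hpos : ∀ᵐ ω ∂P, δ ≤ G₀ ω)
    (hQ₀meas : Measurable[MeasurableSpace.comap W inferInstance] Q₀)
    (hQ₀range : ∀ ω, Q₀ ω ∈ Set.Icc (0:ℝ) 1)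
    (hQ₀orth : ∀ f : Ω → ℝ, Measurable[MeasurableSpace.comap W inferInstance] f →
      (∃ C : ℝ, ∀ ω, |f ω| ≤ C) →
      ∫ ω, A ω * (Y ω - Q₀ ω) * f ω ∂P = 0)
    {J : ℕ} (T : 𝒲 → (Fin J → ℝ)) (hT : Measurable T)
    (QT : Ω → ℝ)
    (hQTmeas : Measurable[MeasurableSpace.comap (fun ω => T (W ω)) inferInstance] QT)
    (hQTrange : ∀ ω, QT ω ∈ Set.Icc (0:ℝ) 1)
    (hQTorth : ∀ f : Ω → ℝ,
      Measurable[MeasurableSpace.comap (fun ω => T (W ω)) inferInstance] f →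
      (∃ C : ℝ, ∀ ω, |f ω| ≤ C) →
      ∫ ω, A ω * (Y ω - QT ω) * f ω ∂P = 0)
    (H Hstar : Ω → ℝ)
    (hH : H =ᵐ[P] P[A|MeasurableSpace.comap QT inferInstance])
    (hHstar : Hstar =ᵐ[P]
      P[A|MeasurableSpace.comap (fun ω => (QT ω, Q₀ ω)) inferInstance])
    (hHpos : ∀ᵐ ω ∂P, δ ≤ H ω)
    (hHstarpos : ∀ᵐ ω ∂P, δ ≤ Hstar ω) :
    |(∫ ω, QT ω ∂P) - (∫ ω, Q₀ ω ∂P)|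
      ≤ (δ ^ 2)⁻¹ * Real.sqrt (∫ ω, (Hstar ω - H ω) ^ 2 ∂P)
          * Real.sqrt (∫ ω, (QT ω - Q₀ ω) ^ 2 ∂P) := by
  obtain ⟨hδ0, hδ1⟩ := hδ
  -- σ-algebra comparisons (stated before `set` so that `‹_›` picks the ambient instance)
  have hmW_le : MeasurableSpace.comap W inferInstance ≤ ‹MeasurableSpace Ω› := hW.comap_le
  have hmT_le_mW : MeasurableSpace.comap (fun ω => T (W ω)) inferInstance
      ≤ MeasurableSpace.comap W inferInstance := by
    have : (MeasurableSpace.comap (fun ω => T (W ω)) inferInstance : MeasurableSpace Ω)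
        = MeasurableSpace.comap W (MeasurableSpace.comap T inferInstance) :=
      (MeasurableSpace.comap_comp (f := T) (g := W)).symm
    rw [this]
    exact MeasurableSpace.comap_mono hT.comap_le
  have hm1_le_mT : MeasurableSpace.comap QT inferInstance
      ≤ MeasurableSpace.comap (fun ω => T (W ω)) inferInstance := hQTmeas.comap_le
  have hm1_le_mW : MeasurableSpace.comap QT inferInstance
      ≤ MeasurableSpace.comap W inferInstance := hm1_le_mT.trans hmT_le_mW
  have hQTmW : Measurable[MeasurableSpace.comap W inferInstance] QT :=
    hQTmeas.mono hmT_le_mW le_rfl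
  have hm2_le_mW : MeasurableSpace.comap (fun ω => (QT ω, Q₀ ω)) inferInstance
      ≤ MeasurableSpace.comap W inferInstance :=
    (Measurable.prodMk hQTmW hQ₀meas).comap_le
  have hm1_le_m2 : MeasurableSpace.comap QT inferInstance
      ≤ MeasurableSpace.comap (fun ω => (QT ω, Q₀ ω)) inferInstance := by
    have : (MeasurableSpace.comap QT inferInstance : MeasurableSpace Ω)
        = MeasurableSpace.comap (fun ω => (QT ω, Q₀ ω))
          (MeasurableSpace.comap Prod.fst inferInstance) :=
      (MeasurableSpace.comap_comp (f := Prod.fst) (g := fun ω => (QT ω, Q₀ ω))).symm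
    rw [this]
    exact MeasurableSpace.comap_mono measurable_fst.comap_le
  have hm1_le : MeasurableSpace.comap QT inferInstance ≤ ‹MeasurableSpace Ω› :=
    hm1_le_mW.trans hmW_le
  have hm2_le : MeasurableSpace.comap (fun ω => (QT ω, Q₀ ω)) inferInstance
      ≤ ‹MeasurableSpace Ω› := hm2_le_mW.trans hmW_le
  -- ambient measurability
  have hQ₀m : Measurable Q₀ := hQ₀meas.mono hmW_le le_rfl
  have hQTm : Measurable QT := hQTmW.mono hmW_le le_rfl
  -- pair map is (MeasurableSpace.comap (fun ω => (QT ω, Q₀ ω)) inferInstance)-measurable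
  have hpair_m2 : Measurable[(MeasurableSpace.comap (fun ω => (QT ω, Q₀ ω)) inferInstance)] (fun ω => (QT ω, Q₀ ω)) :=
    Measurable.of_comap_le le_rfl
  have hQT_m2 : Measurable[(MeasurableSpace.comap (fun ω => (QT ω, Q₀ ω)) inferInstance)] QT := measurable_fst.comp hpair_m2
  have hQ₀_m2 : Measurable[(MeasurableSpace.comap (fun ω => (QT ω, Q₀ ω)) inferInstance)] Q₀ := measurable_snd.comp hpair_m2
  -- conditional expectations
  set h : Ω → ℝ := P[A|(MeasurableSpace.comap QT inferInstance)] with hh_def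
  set hs : Ω → ℝ := P[A|(MeasurableSpace.comap (fun ω => (QT ω, Q₀ ω)) inferInstance)] with hhs_def
  -- bounds on A
  have hA01 : ∀ ω, 0 ≤ A ω ∧ A ω ≤ 1 := fun ω => by
    rcases hAbin ω with h' | h' <;> rw [h'] <;> norm_num
  have hA_int : Integrable A P :=
    (MemLp.of_bound hA.aestronglyMeasurable 1 (ae_of_all _ fun ω => by
      rw [Real.norm_eq_abs, abs_le]
      exact ⟨by linarith [(hA01 ω).1], (hA01 ω).2⟩)).integrable le_rfl
  -- h, hs bounds
  have hh_le_one : ∀ᵐ ω ∂P, h ω ≤ 1 := by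
    have := condExp_mono (m := (MeasurableSpace.comap QT inferInstance)) (μ := P) hA_int (integrable_const 1)
      (ae_of_all _ fun ω => (hA01 ω).2)
    rw [condExp_const hm1_le] at this
    exact this
  have hhs_le_one : ∀ᵐ ω ∂P, hs ω ≤ 1 := by
    have := condExp_mono (m := (MeasurableSpace.comap (fun ω => (QT ω, Q₀ ω)) inferInstance)) (μ := P) hA_int (integrable_const 1)
      (ae_of_all _ fun ω => (hA01 ω).2)
    rw [condExp_const hm2_le] at this
    exact this
  have hh_ge : ∀ᵐ ω ∂P, δ ≤ h ω := by
    filter_upwards [hH, hHpos] with ω h1 h2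
    rw [← h1]; exact h2
  have hhs_ge : ∀ᵐ ω ∂P, δ ≤ hs ω := by
    filter_upwards [hHstar, hHstarpos] with ω h1 h2
    rw [← h1]; exact h2
  -- the weight function
  set f0 : Ω → ℝ := fun ω => (max (h ω) δ)⁻¹ with hf0_def
  have hf0_m1 : Measurable[(MeasurableSpace.comap QT inferInstance)] f0 :=
    ((stronglyMeasurable_condExp (m := (MeasurableSpace.comap QT inferInstance))).measurable.max measurable_const).inv
  have hf0_pos : ∀ ω, 0 < (max (h ω) δ) := fun ω => lt_max_of_lt_right hδ0
  have hf0_bound : ∀ ω, |f0 ω| ≤ δ⁻¹ := fun ω => by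
    rw [abs_of_nonneg (le_of_lt (inv_pos.mpr (hf0_pos ω)))]
    exact inv_anti₀ hδ0 (le_max_right _ _)
  -- orthogonality: ∫ A (Q₀ - QT) f0 = 0
  have horthQ₀ : ∫ ω, A ω * (Y ω - Q₀ ω) * f0 ω ∂P = 0 :=
    hQ₀orth f0 (hf0_m1.mono hm1_le_mW le_rfl) ⟨δ⁻¹, hf0_bound⟩
  have horthQT : ∫ ω, A ω * (Y ω - QT ω) * f0 ω ∂P = 0 :=
    hQTorth f0 (hf0_m1.mono hm1_le_mT le_rfl) ⟨δ⁻¹, hf0_bound⟩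
  -- integrability helper
  have hbint : ∀ (g : Ω → ℝ), Measurable g → (∀ ω, |g ω| ≤ 2 * δ⁻¹ + 2) → Integrable g P :=
    fun g hg hb =>
    (MemLp.of_bound hg.aestronglyMeasurable (2 * δ⁻¹ + 2)
      (ae_of_all _ fun ω => by rw [Real.norm_eq_abs]; exact hb ω)).integrable le_rfl
  have hf0m : Measurable f0 := hf0_m1.mono hm1_le le_rfl
  have hδinv_nonneg : (0:ℝ) ≤ δ⁻¹ := le_of_lt (inv_pos.mpr hδ0)
  have habs : ∀ ω, |A ω| ≤ 1 := fun ω => by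
    rw [abs_of_nonneg (hA01 ω).1]; exact (hA01 ω).2
  have hQ₀abs : ∀ ω, |Q₀ ω| ≤ 1 := fun ω => by
    rw [abs_of_nonneg (hQ₀range ω).1]; exact (hQ₀range ω).2
  have hQTabs : ∀ ω, |QT ω| ≤ 1 := fun ω => by
    rw [abs_of_nonneg (hQTrange ω).1]; exact (hQTrange ω).2
  have hYabs : ∀ ω, |Y ω| ≤ 1 := fun ω => by
    rw [abs_of_nonneg (hYrange ω).1]; exact (hYrange ω).2
  have hdiffabs : ∀ ω, |Q₀ ω - QT ω| ≤ 2 := fun ω => by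
    calc |Q₀ ω - QT ω| ≤ |Q₀ ω| + |QT ω| := abs_sub _ _
      _ ≤ 2 := by linarith [hQ₀abs ω, hQTabs ω]
  have horth : ∫ ω, A ω * (Q₀ ω - QT ω) * f0 ω ∂P = 0 := by
    have hgint : ∀ (u : Ω → ℝ), Measurable u → (∀ ω, |u ω| ≤ 1) →
        Integrable (fun ω => A ω * (Y ω - u ω) * f0 ω) P := fun u hu hub => by
      refine hbint _ ((hA.mul (hY.sub hu)).mul hf0m) fun ω => ?_
      calc |A ω * (Y ω - u ω) * f0 ω| = |A ω| * |Y ω - u ω| * |f0 ω| := by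
            rw [abs_mul, abs_mul]
        _ ≤ 1 * 2 * δ⁻¹ := by
            refine mul_le_mul (mul_le_mul (habs ω) ?_ (abs_nonneg _) zero_le_one)
              (hf0_bound ω) (abs_nonneg _) (by norm_num)
            calc |Y ω - u ω| ≤ |Y ω| + |u ω| := abs_sub _ _
              _ ≤ 2 := by linarith [hYabs ω, hub ω]
        _ ≤ 2 * δ⁻¹ + 2 := by linarith
    have key : ∫ ω, (A ω * (Y ω - QT ω) * f0 ω - A ω * (Y ω - Q₀ ω) * f0 ω) ∂P = 0 := by
      rw [integral_sub (hgint QT hQTm hQTabs) (hgint Q₀ hQ₀m hQ₀abs), horthQT, horthQ₀,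
        sub_zero]
    rw [← key]
    congr 1
    funext ω
    ring
  -- tower: ∫ (Q₀-QT) f0 A = ∫ (Q₀-QT) f0 hs
  set g : Ω → ℝ := fun ω => (Q₀ ω - QT ω) * f0 ω with hg_def
  have hg_m2 : StronglyMeasurable[(MeasurableSpace.comap (fun ω => (QT ω, Q₀ ω)) inferInstance)] g :=
    ((hQ₀_m2.sub hQT_m2).mul (hf0_m1.mono hm1_le_m2 le_rfl)).stronglyMeasurable
  have hg_bound : ∀ ω, |g ω| ≤ 2 * δ⁻¹ := fun ω => by
    calc |g ω| = |Q₀ ω - QT ω| * |f0 ω| := abs_mul _ _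
      _ ≤ 2 * δ⁻¹ :=
        mul_le_mul (hdiffabs ω) (hf0_bound ω) (abs_nonneg _) (by norm_num)
  have hgm : Measurable g := (hQ₀m.sub hQTm).mul hf0m
  have hgA_int : Integrable (fun ω => g ω * A ω) P := by
    refine hbint _ (hgm.mul hA) fun ω => ?_
    calc |g ω * A ω| = |g ω| * |A ω| := abs_mul _ _
      _ ≤ 2 * δ⁻¹ * 1 := mul_le_mul (hg_bound ω) (habs ω) (abs_nonneg _)
          (by positivity)
      _ ≤ 2 * δ⁻¹ + 2 := by linarith
  have htower : ∫ ω, g ω * A ω ∂P = ∫ ω, g ω * hs ω ∂P := by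
    have hpull : P[fun ω => g ω * A ω|(MeasurableSpace.comap (fun ω => (QT ω, Q₀ ω)) inferInstance)] =ᵐ[P] fun ω => g ω * (P[A|(MeasurableSpace.comap (fun ω => (QT ω, Q₀ ω)) inferInstance)]) ω := by
      have := condExp_mul_of_stronglyMeasurable_left (μ := P) hg_m2 hgA_int hA_int
      exact this
    calc ∫ ω, g ω * A ω ∂P = ∫ ω, (P[fun ω => g ω * A ω|(MeasurableSpace.comap (fun ω => (QT ω, Q₀ ω)) inferInstance)]) ω ∂P :=
          (integral_condExp hm2_le).symm
      _ = ∫ ω, g ω * hs ω ∂P := integral_congr_ae hpull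
  -- h * g = Q₀ - QT a.e.
  have hcond_int : Integrable h P := integrable_condExp
  have hconds_int : Integrable hs P := integrable_condExp
  have hhm : Measurable h := (stronglyMeasurable_condExp (m := (MeasurableSpace.comap QT inferInstance))).measurable.mono hm1_le le_rfl
  have hhsm : Measurable hs := (stronglyMeasurable_condExp (m := (MeasurableSpace.comap (fun ω => (QT ω, Q₀ ω)) inferInstance))).measurable.mono hm2_le le_rfl
  have hq_eq : ∫ ω, (Q₀ ω - QT ω) ∂P = ∫ ω, g ω * h ω ∂P := by
    refine integral_congr_ae ?_
    filter_upwards [hh_ge] with ω hω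
    have hmax : max (h ω) δ = h ω := max_eq_left hω
    have hne : h ω ≠ 0 := ne_of_gt (lt_of_lt_of_le hδ0 hω)
    simp only [hg_def, hf0_def, hmax]
    field_simp
  -- g * h = g*(h - hs) + g*hs
  have hsplit : ∫ ω, g ω * h ω ∂P
      = (∫ ω, g ω * (h ω - hs ω) ∂P) + ∫ ω, g ω * hs ω ∂P := by
    have i1 : Integrable (fun ω => g ω * (h ω - hs ω)) P :=
      (hcond_int.sub hconds_int).bdd_mul hgm.aestronglyMeasurable
        (ae_of_all _ fun ω => by rw [Real.norm_eq_abs]; exact hg_bound ω)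
    have i2 : Integrable (fun ω => g ω * hs ω) P :=
      hconds_int.bdd_mul hgm.aestronglyMeasurable
        (ae_of_all _ fun ω => by rw [Real.norm_eq_abs]; exact hg_bound ω)
    rw [← integral_add i1 i2]
    congr 1; funext ω; ring
  -- ∫ g * A = 0
  have hgA_zero : ∫ ω, g ω * A ω ∂P = 0 := by
    rw [← horth]; congr 1; funext ω; ring
  have hmain : ∫ ω, (Q₀ ω - QT ω) ∂P = ∫ ω, g ω * (h ω - hs ω) ∂P := by
    rw [hq_eq, hsplit, ← htower, hgA_zero, add_zero]
  -- bound the RHS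
  have hbound : |∫ ω, g ω * (h ω - hs ω) ∂P|
      ≤ δ⁻¹ * (Real.sqrt (∫ ω, (Hstar ω - H ω) ^ 2 ∂P)
          * Real.sqrt (∫ ω, (QT ω - Q₀ ω) ^ 2 ∂P)) := by
    have i1 : Integrable (fun ω => g ω * (h ω - hs ω)) P :=
      (hcond_int.sub hconds_int).bdd_mul hgm.aestronglyMeasurable
        (ae_of_all _ fun ω => by rw [Real.norm_eq_abs]; exact hg_bound ω)
    have step1 : |∫ ω, g ω * (h ω - hs ω) ∂P| ≤ ∫ ω, |g ω * (h ω - hs ω)| ∂P := by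
      simpa only [Real.norm_eq_abs] using
        norm_integral_le_integral_norm (μ := P) (fun ω => g ω * (h ω - hs ω))
    have step2 : ∫ ω, |g ω * (h ω - hs ω)| ∂P
        ≤ ∫ ω, δ⁻¹ * (|Q₀ ω - QT ω| * |h ω - hs ω|) ∂P := by
      refine integral_mono_of_nonneg (ae_of_all _ fun ω => abs_nonneg _) ?_
        (ae_of_all _ fun ω => ?_)
      · have : Integrable (fun ω => |Q₀ ω - QT ω| * |h ω - hs ω|) P := by
          refine ((hcond_int.sub hconds_int).abs.bdd_mul
            ((hQ₀m.sub hQTm).abs.aestronglyMeasurable)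
            (ae_of_all _ fun ω => by
              rw [Real.norm_eq_abs, abs_abs]; exact hdiffabs ω))
        exact this.const_mul _
      · calc |g ω * (h ω - hs ω)| = |Q₀ ω - QT ω| * |f0 ω| * |h ω - hs ω| := by
              rw [abs_mul, abs_mul]
          _ ≤ |Q₀ ω - QT ω| * δ⁻¹ * |h ω - hs ω| := by
              refine mul_le_mul_of_nonneg_right
                (mul_le_mul_of_nonneg_left (hf0_bound ω) (abs_nonneg _)) (abs_nonneg _)
          _ = δ⁻¹ * (|Q₀ ω - QT ω| * |h ω - hs ω|) := by ring
    have step3 : ∫ ω, δ⁻¹ * (|Q₀ ω - QT ω| * |h ω - hs ω|) ∂P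
        = δ⁻¹ * ∫ ω, |h ω - hs ω| * |Q₀ ω - QT ω| ∂P := by
      rw [← integral_const_mul]
      congr 1; funext ω; ring
    have cs : ∫ ω, |h ω - hs ω| * |Q₀ ω - QT ω| ∂P
        ≤ Real.sqrt (∫ ω, (h ω - hs ω) ^ 2 ∂P)
          * Real.sqrt (∫ ω, (Q₀ ω - QT ω) ^ 2 ∂P) := by
      refine cs_aux P _ _ (hhm.sub hhsm).aestronglyMeasurable
        (hQ₀m.sub hQTm).aestronglyMeasurable 2 2 ?_ (ae_of_all _ hdiffabs)
      filter_upwards [hh_ge, hh_le_one, hhs_ge, hhs_le_one] with ω a b c d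
      have h0 : (0:ℝ) ≤ h ω := le_trans (le_of_lt hδ0) a
      have h1 : (0:ℝ) ≤ hs ω := le_trans (le_of_lt hδ0) c
      rw [abs_le]; constructor <;> linarith
    have heq1 : ∫ ω, (h ω - hs ω) ^ 2 ∂P = ∫ ω, (Hstar ω - H ω) ^ 2 ∂P := by
      refine integral_congr_ae ?_
      filter_upwards [hH, hHstar] with ω e1 e2
      rw [e1, e2]; ring
    have heq2 : ∫ ω, (Q₀ ω - QT ω) ^ 2 ∂P = ∫ ω, (QT ω - Q₀ ω) ^ 2 ∂P := by
      congr 1; funext ω; ring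
    calc |∫ ω, g ω * (h ω - hs ω) ∂P|
        ≤ ∫ ω, δ⁻¹ * (|Q₀ ω - QT ω| * |h ω - hs ω|) ∂P := step1.trans step2
      _ = δ⁻¹ * ∫ ω, |h ω - hs ω| * |Q₀ ω - QT ω| ∂P := step3
      _ ≤ δ⁻¹ * (Real.sqrt (∫ ω, (h ω - hs ω) ^ 2 ∂P)
            * Real.sqrt (∫ ω, (Q₀ ω - QT ω) ^ 2 ∂P)) :=
          mul_le_mul_of_nonneg_left cs hδinv_nonneg
      _ = δ⁻¹ * (Real.sqrt (∫ ω, (Hstar ω - H ω) ^ 2 ∂P)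
            * Real.sqrt (∫ ω, (QT ω - Q₀ ω) ^ 2 ∂P)) := by rw [heq1, heq2]
  -- final assembly
  have hQ₀int : Integrable Q₀ P :=
    (MemLp.of_bound hQ₀m.aestronglyMeasurable 1
      (ae_of_all _ fun ω => by rw [Real.norm_eq_abs]; exact hQ₀abs ω)).integrable le_rfl
  have hQTint : Integrable QT P :=
    (MemLp.of_bound hQTm.aestronglyMeasurable 1
      (ae_of_all _ fun ω => by rw [Real.norm_eq_abs]; exact hQTabs ω)).integrable le_rfl
  have habs_eq : |(∫ ω, QT ω ∂P) - ∫ ω, Q₀ ω ∂P| = |∫ ω, (Q₀ ω - QT ω) ∂P| := by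
    rw [integral_sub hQ₀int hQTint, abs_sub_comm]
  have hδ2 : δ⁻¹ ≤ (δ ^ 2)⁻¹ := by
    apply inv_anti₀ (by positivity)
    nlinarith
  have hsq_nonneg : 0 ≤ Real.sqrt (∫ ω, (Hstar ω - H ω) ^ 2 ∂P)
      * Real.sqrt (∫ ω, (QT ω - Q₀ ω) ^ 2 ∂P) :=
    mul_nonneg (Real.sqrt_nonneg _) (Real.sqrt_nonneg _)
  calc |(∫ ω, QT ω ∂P) - ∫ ω, Q₀ ω ∂P|
      = |∫ ω, (Q₀ ω - QT ω) ∂P| := habs_eq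
    _ = |∫ ω, g ω * (h ω - hs ω) ∂P| := by rw [hmain]
    _ ≤ δ⁻¹ * (Real.sqrt (∫ ω, (Hstar ω - H ω) ^ 2 ∂P)
          * Real.sqrt (∫ ω, (QT ω - Q₀ ω) ^ 2 ∂P)) := hbound
    _ ≤ (δ ^ 2)⁻¹ * (Real.sqrt (∫ ω, (Hstar ω - H ω) ^ 2 ∂P)
          * Real.sqrt (∫ ω, (QT ω - Q₀ ω) ^ 2 ∂P)) :=
        mul_le_mul_of_nonneg_right hδ2 hsq_nonneg
    _ = (δ ^ 2)⁻¹ * Real.sqrt (∫ ω, (Hstar ω - H ω) ^ 2 ∂P)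
          * Real.sqrt (∫ ω, (QT ω - Q₀ ω) ^ 2 ∂P) := by ring
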